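/- Let X, Y ∈ ℝ^{m×r} with range(X) = range(Y). Then the oblique projector P = X (Yᵀ X)⁺ Yᵀ equals the orthogonal projector X (Xᵀ X)⁺ Xᵀ; in particular P is symmetric and idempotent. -/

import Mathlib

open Matrix

/-- The four Penrose conditions: `Ap` is the Moore–Penrose pseudoinverse of `A`. -/
def IsMoorePenrose {m n : Type*} [Fintype m] [Fintype n]
    (A : Matrix m n ℝ) (Ap : Matrix n m ℝ) : Prop :=
  A * Ap * A = A ∧ Ap * A * Ap = Ap ∧ (A * Ap)ᵀ = A * Ap ∧ (Ap * A)ᵀ = Ap * A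

/-- Spectral (operator) norm of a real matrix, induced by the Euclidean norms. -/
noncomputable def specNorm {m n : Type*} [Fintype m] [Fintype n] [DecidableEq n]
    (A : Matrix m n ℝ) : ℝ :=
  ‖LinearMap.toContinuousLinearMap (Matrix.toEuclideanLin A)‖

/-- Frobenius norm of a real matrix. -/
noncomputable def frobNorm {m n : Type*} [Fintype m] [Fintype n]
    (A : Matrix m n ℝ) : ℝ :=
  Real.sqrt (∑ i, ∑ j, (A i j) ^ 2)

/-- Uniqueness of the Moore–Penrose pseudoinverse. -/
lemma mp_unique {m n : Type*} [Fintype m] [Fintype n]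
    {A : Matrix m n ℝ} {P Q : Matrix n m ℝ}
    (hP : IsMoorePenrose A P) (hQ : IsMoorePenrose A Q) : P = Q := by
  obtain ⟨hP1, hP2, hP3, hP4⟩ := hP
  obtain ⟨hQ1, hQ2, hQ3, hQ4⟩ := hQ
  have h1 : A * P = A * Q := by
    calc A * P = (A * P)ᵀ := hP3.symm
    _ = Pᵀ * Aᵀ := transpose_mul _ _
    _ = Pᵀ * (A * Q * A)ᵀ := by rw [hQ1]
    _ = Pᵀ * (Aᵀ * (A * Q)ᵀ) := by rw [transpose_mul (A * Q) A]
    _ = (Pᵀ * Aᵀ) * (A * Q)ᵀ := by rw [Matrix.mul_assoc]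
    _ = (A * P)ᵀ * (A * Q)ᵀ := by rw [← transpose_mul A P]
    _ = (A * P) * (A * Q) := by rw [hP3, hQ3]
    _ = (A * P * A) * Q := by simp only [Matrix.mul_assoc]
    _ = A * Q := by rw [hP1]
  have h2 : P * A = Q * A := by
    calc P * A = (P * A)ᵀ := hP4.symm
    _ = Aᵀ * Pᵀ := transpose_mul _ _
    _ = (A * Q * A)ᵀ * Pᵀ := by rw [hQ1]
    _ = (Q * A)ᵀ * Aᵀ * Pᵀ := by
        rw [Matrix.mul_assoc A Q A, transpose_mul A (Q * A)]
    _ = (Q * A)ᵀ * (Aᵀ * Pᵀ) := by rw [Matrix.mul_assoc]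
    _ = (Q * A) * (P * A)ᵀ := by rw [hQ4, ← transpose_mul P A]
    _ = Q * A * (P * A) := by rw [hP4]
    _ = Q * (A * P * A) := by simp only [Matrix.mul_assoc]
    _ = Q * A := by rw [hP1]
  calc P = P * A * P := hP2.symm
  _ = Q * A * P := by rw [h2]
  _ = Q * (A * P) := by rw [Matrix.mul_assoc]
  _ = Q * (A * Q) := by rw [h1]
  _ = Q * A * Q := by rw [Matrix.mul_assoc]
  _ = Q := hQ2

/-- Cancellation: XᵀX M = XᵀX N implies X M = X N. -/
lemma cancel {m r : Type*} [Fintype m] [Fintype r]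
    (X : Matrix m r ℝ) {M N : Matrix r r ℝ}
    (h : Xᵀ * X * M = Xᵀ * X * N) : X * M = X * N := by
  have key : (X * M - X * N)ᵀ * (X * M - X * N) = 0 := by
    have expand : (X * M - X * N)ᵀ * (X * M - X * N)
        = (M - N)ᵀ * (Xᵀ * X * M - Xᵀ * X * N) := by
      simp only [transpose_sub, transpose_mul, Matrix.sub_mul, Matrix.mul_sub,
        Matrix.mul_assoc]
    rw [expand, h, sub_self, Matrix.mul_zero]
  have hz := Matrix.conjTranspose_mul_self_eq_zero (A := X * M - X * N)
  rw [conjTranspose_eq_transpose_of_trivial] at hz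
  exact sub_eq_zero.mp (hz.mp key)


/-- If range(X) = range(Y), then the oblique projector
X (YᵀX)⁺ Yᵀ equals the orthogonal projector X (XᵀX)⁺ Xᵀ; in particular it is
symmetric and idempotent. -/
theorem stmt2 {m r : ℕ} (X Y : Matrix (Fin m) (Fin r) ℝ)
    (hrange : LinearMap.range X.mulVecLin = LinearMap.range Y.mulVecLin)
    (Cp : Matrix (Fin r) (Fin r) ℝ) (hCp : IsMoorePenrose (Yᵀ * X) Cp)
    (Gp : Matrix (Fin r) (Fin r) ℝ) (hGp : IsMoorePenrose (Xᵀ * X) Gp) :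
    X * Cp * Yᵀ = X * Gp * Xᵀ ∧
      (X * Cp * Yᵀ)ᵀ = X * Cp * Yᵀ ∧
      (X * Cp * Yᵀ) * (X * Cp * Yᵀ) = X * Cp * Yᵀ := by
  have hGsymm : (Xᵀ * X)ᵀ = Xᵀ * X := by rw [transpose_mul, transpose_transpose]
  have hGpT : IsMoorePenrose (Xᵀ * X) Gpᵀ := by
    obtain ⟨h1, h2, h3, h4⟩ := hGp
    refine ⟨?_, ?_, ?_, ?_⟩
    · have := congrArg transpose h1
      simp only [transpose_mul, transpose_transpose] at this ⊢
      simp only [Matrix.mul_assoc] at this ⊢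
      exact this
    · have := congrArg transpose h2
      simp only [transpose_mul, transpose_transpose] at this ⊢
      simp only [Matrix.mul_assoc] at this ⊢
      exact this
    · calc (Xᵀ * X * Gpᵀ)ᵀ = Gp * (Xᵀ * X)ᵀ := by rw [transpose_mul, transpose_transpose]
      _ = Gp * (Xᵀ * X) := by rw [hGsymm]
      _ = (Gp * (Xᵀ * X))ᵀ := h4.symm
      _ = (Xᵀ * X)ᵀ * Gpᵀ := transpose_mul _ _
      _ = Xᵀ * X * Gpᵀ := by rw [hGsymm]
    · calc (Gpᵀ * (Xᵀ * X))ᵀ = (Xᵀ * X)ᵀ * Gp := by rw [transpose_mul, transpose_transpose]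
      _ = Xᵀ * X * Gp := by rw [hGsymm]
      _ = (Xᵀ * X * Gp)ᵀ := h3.symm
      _ = Gpᵀ * (Xᵀ * X)ᵀ := transpose_mul _ _
      _ = Gpᵀ * (Xᵀ * X) := by rw [hGsymm]
  have hGpsymm : Gpᵀ = Gp := mp_unique hGpT hGp
  -- X * Gp * (XᵀX) = X
  have h1 : X * (Gp * (Xᵀ * X)) = X := by
    have hstep : Xᵀ * X * (Gp * (Xᵀ * X)) = Xᵀ * X * 1 := by
      rw [Matrix.mul_one, ← Matrix.mul_assoc]; exact hGp.1
    have := cancel X hstep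
    rwa [Matrix.mul_one] at this
  -- (XᵀX) * Gp * Xᵀ = Xᵀ
  have h2 : Xᵀ * X * (Gp * Xᵀ) = Xᵀ := by
    have h1' : X * Gp * (Xᵀ * X) = X := by rw [Matrix.mul_assoc]; exact h1
    have := congrArg transpose h1'
    simp only [transpose_mul, transpose_transpose, hGpsymm] at this
    simp only [Matrix.mul_assoc] at this ⊢
    exact this
  -- Y = X * A
  have hA : ∃ A : Matrix (Fin r) (Fin r) ℝ, Y = X * A := by
    have hmem : ∀ j : Fin r, (fun i => Y i j) ∈ LinearMap.range X.mulVecLin := by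
      intro j
      rw [hrange]
      exact ⟨Pi.single j 1, by simp [Matrix.mulVecLin_apply]; rfl⟩
    choose a ha using hmem
    refine ⟨Matrix.of fun k j => a j k, ?_⟩
    ext i j
    have := congrFun (ha j) i
    simp only [Matrix.mulVecLin_apply, Matrix.mulVec, dotProduct] at this
    simp [Matrix.mul_apply, ← this]
  -- X = Y * B
  have hB : ∃ B : Matrix (Fin r) (Fin r) ℝ, X = Y * B := by
    have hmem : ∀ j : Fin r, (fun i => X i j) ∈ LinearMap.range Y.mulVecLin := by
      intro j
      rw [← hrange]
      exact ⟨Pi.single j 1, by simp [Matrix.mulVecLin_apply]; rfl⟩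
    choose b hb using hmem
    refine ⟨Matrix.of fun k j => b j k, ?_⟩
    ext i j
    have := congrFun (hb j) i
    simp only [Matrix.mulVecLin_apply, Matrix.mulVec, dotProduct] at this
    simp [Matrix.mul_apply, ← this]
  obtain ⟨A, hA⟩ := hA
  obtain ⟨B, hB⟩ := hB
  -- X * Cp * (YᵀX) = X
  have hPX : X * (Cp * (Yᵀ * X)) = X := by
    have hXt : Xᵀ = Bᵀ * Yᵀ := by rw [hB, transpose_mul]
    have hstep : Xᵀ * X * (Cp * (Yᵀ * X)) = Xᵀ * X * 1 := by
      rw [Matrix.mul_one]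
      calc Xᵀ * X * (Cp * (Yᵀ * X)) = Bᵀ * Yᵀ * X * (Cp * (Yᵀ * X)) := by rw [← hXt]
      _ = Bᵀ * (Yᵀ * X * Cp * (Yᵀ * X)) := by simp only [Matrix.mul_assoc]
      _ = Bᵀ * (Yᵀ * X * Cp * (Yᵀ * X) * 1) := by rw [Matrix.mul_one]
      _ = Bᵀ * (Yᵀ * X * 1) := by rw [hCp.1]
      _ = Bᵀ * (Yᵀ * X) := by rw [Matrix.mul_one]
      _ = Bᵀ * Yᵀ * X := by rw [Matrix.mul_assoc]
      _ = Xᵀ * X := by rw [← hXt]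
    have := cancel X hstep
    rwa [Matrix.mul_one] at this
  -- Yᵀ * (X * Gp * Xᵀ) = Yᵀ
  have hsym : (X * (Gp * Xᵀ))ᵀ = X * (Gp * Xᵀ) := by
    simp only [transpose_mul, transpose_transpose, hGpsymm, ← Matrix.mul_assoc]
  have hYP : Yᵀ * (X * (Gp * Xᵀ)) = Yᵀ := by
    have hPY : X * (Gp * Xᵀ) * Y = Y := by
      calc X * (Gp * Xᵀ) * Y = X * (Gp * Xᵀ) * (X * A) := by rw [← hA]
      _ = X * (Gp * (Xᵀ * X)) * A := by simp only [Matrix.mul_assoc]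
      _ = X * A := by rw [h1]
      _ = Y := hA.symm
    have := congrArg transpose hPY
    rw [transpose_mul] at this
    rwa [hsym] at this
  -- main equality
  have hmain : X * Cp * Yᵀ = X * Gp * Xᵀ := by
    calc X * Cp * Yᵀ = X * Cp * (Yᵀ * (X * (Gp * Xᵀ))) := by rw [hYP]
    _ = X * (Cp * (Yᵀ * X)) * (Gp * Xᵀ) := by simp only [Matrix.mul_assoc]
    _ = X * (Gp * Xᵀ) := by rw [hPX]
    _ = X * Gp * Xᵀ := by rw [Matrix.mul_assoc]
  refine ⟨hmain, ?_, ?_⟩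
  · rw [hmain]
    simp only [transpose_mul, transpose_transpose, hGpsymm, ← Matrix.mul_assoc]
  · rw [hmain]
    calc X * Gp * Xᵀ * (X * Gp * Xᵀ) = X * Gp * (Xᵀ * X * (Gp * Xᵀ)) := by
          simp only [Matrix.mul_assoc]
    _ = X * Gp * Xᵀ := by rw [h2]
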